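/- Let G be a maximal stabilizer group on N qubits such that every nonidentity element of G has support of size at least 5 (i.e., δ(G) ≥ 5). Then any traceless Hamiltonian Ĥ that is a sum of terms each acting nontrivially on at most 2 sites and satisfies Ĥ|ψ_G⟩ = 0 must be zero. Equivalently, no zero-energy stabilizer eigenstate of a nonzero two-body Hamiltonian is in k-body microscopic thermal equilibrium for k ≥ 4. -/

import Mathlib

open Matrix Complex BigOperators
open scoped Classical

noncomputable section

/-- Single-qubit Pauli matrices: I, X, Y, Z. -/
def pauli1 : Fin 4 → Matrix (Fin 2) (Fin 2) ℂ
  | 0 => 1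
  | 1 => !![0, 1; 1, 0]
  | 2 => !![0, -Complex.I; Complex.I, 0]
  | 3 => !![1, 0; 0, -1]

/-- Operators on an N-qubit system with sites indexed by `V`. -/
abbrev QOp (V : Type*) := Matrix (V → Fin 2) (V → Fin 2) ℂ

/-- The prefactor-1 Pauli string with single-site labels `p`. -/
def pauliOp {V : Type*} [Fintype V] (p : V → Fin 4) : QOp V :=
  Matrix.of fun x y => ∏ i, pauli1 (p i) (x i) (y i)

/-- Support of a Pauli string: sites where the tensor factor is not the identity. -/
def psupp {V : Type*} [Fintype V] (p : V → Fin 4) : Finset V :=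
  Finset.univ.filter fun i => p i ≠ 0

/-- Allowed phases of Pauli group elements. -/
def isPhase (a : ℂ) : Prop := a = 1 ∨ a = -1 ∨ a = Complex.I ∨ a = -Complex.I

/-- A maximal stabilizer group on qubits indexed by `V`: an abelian set of
prefactor-`±1` Pauli strings, closed under multiplication, containing `I`,
not containing `-I`, of cardinality `2 ^ |V|`. -/
structure MaxStabilizer (V : Type*) [Fintype V] [DecidableEq V] where
  carrier : Finset (QOp V)
  mem_pauli : ∀ g ∈ carrier, ∃ (c : ℂ) (p : V → Fin 4), (c = 1 ∨ c = -1) ∧ g = c • pauliOp p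
  one_mem : (1 : QOp V) ∈ carrier
  mul_mem : ∀ g ∈ carrier, ∀ h ∈ carrier, g * h ∈ carrier
  mul_comm' : ∀ g ∈ carrier, ∀ h ∈ carrier, g * h = h * g
  neg_one_not_mem : (-1 : QOp V) ∉ carrier
  card_eq : carrier.card = 2 ^ Fintype.card V

/-- `ψ` is the stabilizer state of `G`: a normalized common `+1`-eigenvector of all
elements of `G`. -/
def IsStabState {V : Type*} [Fintype V] [DecidableEq V] (G : MaxStabilizer V)
    (ψ : (V → Fin 2) → ℂ) : Prop :=
  (∀ g ∈ G.carrier, Matrix.mulVec g ψ = ψ) ∧ ∑ x, starRingEnd ℂ (ψ x) * ψ x = 1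

/-- The projector `|ψ⟩⟨ψ|` onto a state `ψ`. -/
def projOf {V : Type*} (ψ : (V → Fin 2) → ℂ) : QOp V :=
  Matrix.vecMulVec ψ fun x => starRingEnd ℂ (ψ x)

/-- Reduced density matrix (partial trace over the complement of `A`). -/
def reduced {V : Type*} [Fintype V] [DecidableEq V] (ρ : QOp V) (A : Finset V) :
    Matrix ({i // i ∈ A} → Fin 2) ({i // i ∈ A} → Fin 2) ℂ :=
  Matrix.of fun a b => ∑ c : {i // i ∉ A} → Fin 2,
    ρ (fun i => if h : i ∈ A then a ⟨i, h⟩ else c ⟨i, h⟩)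
      (fun i => if h : i ∈ A then b ⟨i, h⟩ else c ⟨i, h⟩)

/-- `δ(G)`: minimum support size over nonidentity elements of `G`. -/
def sdelta {V : Type*} [Fintype V] [DecidableEq V] (G : MaxStabilizer V) : ℕ :=
  sInf {k | ∃ (c : ℂ) (p : V → Fin 4), (c = 1 ∨ c = -1) ∧ c • pauliOp p ∈ G.carrier ∧
    c • pauliOp p ≠ 1 ∧ (psupp p).card = k}

def penc : Fin 4 → ZMod 2 × ZMod 2
  | 0 => (0,0) | 1 => (1,0) | 2 => (1,1) | 3 => (0,1)

def pdec (v : ZMod 2 × ZMod 2) : Fin 4 :=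
  if v = (0,0) then 0 else if v = (1,0) then 1 else if v = (1,1) then 2 else 3

lemma pdec_penc : ∀ a, pdec (penc a) = a := by decide
lemma penc_pdec : ∀ v, penc (pdec v) = v := by decide

def pmul (a b : Fin 4) : Fin 4 := pdec (penc a + penc b)

def pph : Fin 4 → Fin 4 → ℂ
  | 1, 2 => Complex.I
  | 2, 1 => -Complex.I
  | 2, 3 => Complex.I
  | 3, 2 => -Complex.I
  | 3, 1 => Complex.I
  | 1, 3 => -Complex.I
  | _, _ => 1

def psymp (a b : Fin 4) : ZMod 2 := (penc a).1 * (penc b).2 + (penc a).2 * (penc b).1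

def sgn (x : ZMod 2) : ℂ := if x = 0 then 1 else -1

lemma pmul_self (a : Fin 4) : pmul a a = 0 := by revert a; decide
lemma pmul_comm' (a b : Fin 4) : pmul a b = pmul b a := by revert a b; decide
lemma pmul_zero' (a : Fin 4) : pmul a 0 = a := by revert a; decide
lemma zero_pmul' (a : Fin 4) : pmul 0 a = a := by revert a; decide
lemma pmul_eq_zero_iff {a b : Fin 4} : pmul a b = 0 ↔ a = b := by revert a b; decide
lemma psymp_self (a : Fin 4) : psymp a a = 0 := by revert a; decide
lemma penc_pmul (a b : Fin 4) : penc (pmul a b) = penc a + penc b := by revert a b; decide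

lemma pph_self (a : Fin 4) : pph a a = 1 := by fin_cases a <;> rfl
lemma pph_zero (a : Fin 4) : pph a 0 = 1 := by fin_cases a <;> rfl
lemma zero_pph (a : Fin 4) : pph 0 a = 1 := by fin_cases a <;> rfl
lemma pph_ne_zero (a b : Fin 4) : pph a b ≠ 0 := by
  fin_cases a <;> fin_cases b <;> simp [pph, Complex.I_ne_zero]

lemma sgn_add (x y : ZMod 2) : sgn (x + y) = sgn x * sgn y := by
  rcases (show ∀ x : ZMod 2, x = 0 ∨ x = 1 by decide) x with rfl | rfl <;>
    rcases (show ∀ x : ZMod 2, x = 0 ∨ x = 1 by decide) y with rfl | rfl <;>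
    simp [sgn, show (1+1 : ZMod 2) = 0 from rfl]

lemma sgn_zero : sgn 0 = 1 := rfl
lemma sgn_one : sgn 1 = -1 := rfl

lemma pauli1_mul (a b : Fin 4) :
    pauli1 a * pauli1 b = pph a b • pauli1 (pmul a b) := by
  fin_cases a <;> fin_cases b <;>
    simp (config := { decide := true }) [pauli1, pph, pmul, penc, pdec, Matrix.one_fin_two]

lemma pauli1_mul_apply (a b : Fin 4) (x y : Fin 2) :
    ∑ t, pauli1 a x t * pauli1 b t y = pph a b * pauli1 (pmul a b) x y := by
  have := congrFun (congrFun (pauli1_mul a b) x) y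
  simpa [Matrix.mul_apply, Matrix.smul_apply, smul_eq_mul] using this

lemma pauli1_herm (a : Fin 4) (x y : Fin 2) :
    starRingEnd ℂ (pauli1 a y x) = pauli1 a x y := by
  fin_cases a <;> fin_cases x <;> fin_cases y <;> simp [pauli1, Matrix.one_apply]

lemma pauli1_trace (a : Fin 4) : ∑ x, pauli1 a x x = if a = 0 then 2 else 0 := by
  fin_cases a <;> simp [pauli1, Fin.sum_univ_two, Matrix.one_apply] <;> norm_num

lemma pph_comm (a b : Fin 4) : pph a b = sgn (psymp a b) * pph b a := by
  fin_cases a <;> fin_cases b <;>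
    simp (config := { decide := true }) [pph, psymp, penc, sgn] <;> norm_num [Complex.ext_iff]

section strings
variable {V : Type*} [Fintype V] [DecidableEq V]

lemma sgn_sum' (s : Finset V) (f : V → ZMod 2) :
    ∏ i ∈ s, sgn (f i) = sgn (∑ i ∈ s, f i) := by
  classical
  induction s using Finset.cons_induction with
  | empty => simp [sgn_zero]
  | cons a s ha ih => rw [Finset.prod_cons, Finset.sum_cons, sgn_add, ih]

lemma sgn_sum (f : V → ZMod 2) : ∏ i, sgn (f i) = sgn (∑ i, f i) := sgn_sum' _ f

/-- pointwise product of Pauli strings -/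
def smul2 (p q : V → Fin 4) : V → Fin 4 := fun i => pmul (p i) (q i)

/-- total phase -/
def pphs (p q : V → Fin 4) : ℂ := ∏ i, pph (p i) (q i)

/-- total symplectic form -/
def symps (p q : V → Fin 4) : ZMod 2 := ∑ i, psymp (p i) (q i)

lemma pphs_ne_zero (p q : V → Fin 4) : pphs p q ≠ 0 :=
  Finset.prod_ne_zero_iff.2 fun i _ => pph_ne_zero _ _

set_option maxHeartbeats 1000000 in
lemma pauliOp_mul (p q : V → Fin 4) :
    pauliOp p * pauliOp q = pphs p q • pauliOp (smul2 p q) := by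
  ext x y
  simp only [Matrix.mul_apply, pauliOp, Matrix.of_apply, Matrix.smul_apply, smul_eq_mul]
  calc ∑ z : V → Fin 2, (∏ i, pauli1 (p i) (x i) (z i)) * ∏ i, pauli1 (q i) (z i) (y i)
      = ∑ z : V → Fin 2, ∏ i, (pauli1 (p i) (x i) (z i) * pauli1 (q i) (z i) (y i)) := by
        simp [Finset.prod_mul_distrib]
    _ = ∏ i, ∑ t, pauli1 (p i) (x i) t * pauli1 (q i) t (y i) :=
        (Fintype.prod_sum (κ := fun _ : V => Fin 2)
          (fun i t => pauli1 (p i) (x i) t * pauli1 (q i) t (y i))).symm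
    _ = ∏ i, (pph (p i) (q i) * pauli1 (pmul (p i) (q i)) (x i) (y i)) :=
        Finset.prod_congr rfl fun i _ => pauli1_mul_apply _ _ _ _
    _ = pphs p q * ∏ i, pauli1 (smul2 p q i) (x i) (y i) := by
        rw [Finset.prod_mul_distrib]; rfl

lemma pauliOp_zero : pauliOp (fun _ => (0 : Fin 4) : V → Fin 4) = 1 := by
  ext x y
  simp only [pauliOp, Matrix.of_apply, Matrix.one_apply]
  rcases eq_or_ne x y with rfl | hxy
  · simp [pauli1, Matrix.one_apply]
  · obtain ⟨i, hi⟩ : ∃ i, x i ≠ y i := Function.ne_iff.1 hxy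
    rw [if_neg hxy]
    exact Finset.prod_eq_zero (Finset.mem_univ i) (by simp [pauli1, Matrix.one_apply, hi])

set_option maxHeartbeats 1000000 in
lemma pauliOp_trace (p : V → Fin 4) :
    ∑ x, pauliOp p x x = if p = (fun _ => 0) then (2:ℂ) ^ Fintype.card V else 0 := by
  have : ∑ x : V → Fin 2, ∏ i, pauli1 (p i) (x i) (x i)
      = ∏ i, ∑ t, pauli1 (p i) t t :=
        (Fintype.prod_sum (κ := fun _ : V => Fin 2) (fun i t => pauli1 (p i) t t)).symm
  simp only [pauliOp, Matrix.of_apply]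
  rw [this]
  rcases eq_or_ne p (fun _ => 0) with rfl | hp
  · rw [if_pos rfl,
      Finset.prod_congr rfl (fun (i : V) _ => by rw [pauli1_trace]; simp :
        ∀ i ∈ Finset.univ, ∑ t, pauli1 ((fun _ => (0:Fin 4)) i) t t = 2)]
    simp [Finset.prod_const, Finset.card_univ]
  · obtain ⟨i, hi⟩ : ∃ i, p i ≠ 0 := Function.ne_iff.1 hp
    rw [if_neg hp]
    exact Finset.prod_eq_zero (Finset.mem_univ i) (by rw [pauli1_trace, if_neg hi])

lemma trace_pauliOp_mul (p q : V → Fin 4) :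
    ∑ x, (pauliOp p * pauliOp q) x x
      = if p = q then (2:ℂ) ^ Fintype.card V else 0 := by
  rw [pauliOp_mul]
  have hsm : smul2 p q = (fun _ => 0) ↔ p = q := by
    constructor
    · intro hh; funext i
      exact pmul_eq_zero_iff.1 (congrFun hh i)
    · rintro rfl; funext i; exact pmul_self _
  simp only [Matrix.smul_apply, smul_eq_mul, ← Finset.mul_sum, pauliOp_trace]
  rcases eq_or_ne p q with rfl | hpq
  · simp [hsm, pphs, pph_self]
  · rw [if_neg fun hh => hpq (hsm.1 hh), mul_zero, if_neg hpq]

lemma pauliOp_sq (p : V → Fin 4) : pauliOp p * pauliOp p = 1 := by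
  rw [pauliOp_mul]
  have : smul2 p p = fun _ => 0 := funext fun i => pmul_self _
  rw [this, pauliOp_zero]
  simp [pphs, pph_self]

lemma two_pow_ne_zero' : ((2:ℂ) ^ Fintype.card V) ≠ 0 := pow_ne_zero _ two_ne_zero

lemma pauliOp_ne_zero (p : V → Fin 4) : pauliOp p ≠ (0 : QOp V) := by
  intro hp
  have h := trace_pauliOp_mul p p
  rw [hp, if_pos rfl] at h
  simp only [Matrix.zero_mul, Matrix.zero_apply, Finset.sum_const_zero] at h
  exact two_pow_ne_zero' h.symm

lemma smul_pauliOp_inj {c d : ℂ} {p q : V → Fin 4} (hc : c ≠ 0)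
    (hh : c • pauliOp p = d • pauliOp q) : p = q ∧ c = d := by
  have h1 := congrArg (fun M : QOp V => ∑ x, (M * pauliOp p) x x) hh
  simp only [Matrix.smul_mul, Matrix.smul_apply, smul_eq_mul, ← Finset.mul_sum,
    trace_pauliOp_mul, eq_self_iff_true, if_true] at h1
  have h2 : (2:ℂ) ^ Fintype.card V ≠ 0 := two_pow_ne_zero'
  by_cases hqp : q = p
  · subst hqp
    rw [if_pos rfl] at h1
    exact ⟨rfl, mul_right_cancel₀ h2 h1⟩
  · rw [if_neg hqp, mul_zero] at h1
    exact absurd (mul_eq_zero.1 h1) (by push_neg; exact ⟨hc, h2⟩)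

lemma pphs_comm (p q : V → Fin 4) : pphs p q = sgn (symps p q) * pphs q p := by
  unfold pphs symps
  rw [← sgn_sum, ← Finset.prod_mul_distrib]
  exact Finset.prod_congr rfl fun i _ => pph_comm _ _

lemma pauliOp_herm (p : V → Fin 4) : (pauliOp p)ᴴ = pauliOp p := by
  ext x y
  simp only [Matrix.conjTranspose_apply, pauliOp, Matrix.of_apply, RCLike.star_def, map_prod]
  exact Finset.prod_congr rfl fun i _ => pauli1_herm _ _ _

end strings

section stab
variable {N : ℕ} (G : MaxStabilizer (Fin N))

/-- `p` is the Pauli string of some element of `G`. -/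
def inG (p : Fin N → Fin 4) : Prop :=
  ∃ c : ℂ, (c = 1 ∨ c = -1) ∧ c • pauliOp p ∈ G.carrier

lemma phase_ne_zero {c : ℂ} (hc : c = 1 ∨ c = -1) : c ≠ 0 := by
  rcases hc with rfl | rfl <;> norm_num

lemma inG_zero : inG G (fun _ => 0) :=
  ⟨1, Or.inl rfl, by rw [pauliOp_zero, one_smul]; exact G.one_mem⟩

set_option maxHeartbeats 1000000 in
lemma smul_mul_smul_pauliOp (c d : ℂ) (p q : Fin N → Fin 4) :
    (c • pauliOp p) * (d • pauliOp q) = (c * d * pphs p q) • pauliOp (smul2 p q) := by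
  rw [Matrix.smul_mul, Matrix.mul_smul, pauliOp_mul, smul_smul, smul_smul, mul_assoc]

set_option maxHeartbeats 2000000 in
lemma inG_mul {p q : Fin N → Fin 4} (hp : inG G p) (hq : inG G q) : inG G (smul2 p q) := by
  obtain ⟨c, hc, hcm⟩ := hp
  obtain ⟨d, hd, hdm⟩ := hq
  have hm := G.mul_mem _ hcm _ hdm
  obtain ⟨e, p', he, hrep⟩ := G.mem_pauli _ hm
  rw [smul_mul_smul_pauliOp] at hrep
  have hne : c * d * pphs p q ≠ 0 :=
    mul_ne_zero (mul_ne_zero (phase_ne_zero hc) (phase_ne_zero hd)) (pphs_ne_zero p q)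
  obtain ⟨hpq, -⟩ := smul_pauliOp_inj (p := smul2 p q) (q := p') hne hrep
  exact ⟨e, he, by rw [hpq, ← hrep, ← smul_mul_smul_pauliOp]; exact hm⟩

lemma inG_c_unique {p : Fin N → Fin 4} {c d : ℂ} (hc : c = 1 ∨ c = -1) (hd : d = 1 ∨ d = -1)
    (hcm : c • pauliOp p ∈ G.carrier) (hdm : d • pauliOp p ∈ G.carrier) : c = d := by
  by_contra hne
  have hcd : c * d = -1 := by
    rcases hc with rfl | rfl <;> rcases hd with rfl | rfl <;> norm_num <;> simp_all
  have hm := G.mul_mem _ hcm _ hdm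
  rw [smul_mul_smul_pauliOp] at hm
  have h2 : smul2 p p = fun _ => 0 := funext fun i => pmul_self _
  rw [h2, pauliOp_zero] at hm
  have h3 : pphs p p = 1 := by
    unfold pphs; rw [Finset.prod_congr rfl fun i _ => pph_self (p i)]; simp
  rw [h3, hcd] at hm
  simp only [mul_one, neg_smul, one_smul] at hm
  exact G.neg_one_not_mem hm

/-! ### Symplectic vector space -/

abbrev VEC (N : ℕ) := Fin N → ZMod 2 × ZMod 2

def encs (p : Fin N → Fin 4) : VEC N := fun i => penc (p i)
def decs (v : VEC N) : Fin N → Fin 4 := fun i => pdec (v i)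

lemma decs_encs (p : Fin N → Fin 4) : decs (encs p) = p := funext fun i => pdec_penc _
lemma encs_decs (v : VEC N) : encs (decs v) = v := funext fun i => penc_pdec _

def Bf : LinearMap.BilinForm (ZMod 2) (VEC N) :=
  LinearMap.mk₂ (ZMod 2) (fun v w => ∑ i, ((v i).1 * (w i).2 + (v i).2 * (w i).1))
    (fun v v' w => by
      rw [← Finset.sum_add_distrib]
      exact Finset.sum_congr rfl fun i _ => by
        simp only [Pi.add_apply, Prod.fst_add, Prod.snd_add]; ring)
    (fun c v w => by
      simp only [smul_eq_mul]
      rw [Finset.mul_sum]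
      exact Finset.sum_congr rfl fun i _ => by
        simp only [Pi.smul_apply, Prod.smul_fst, Prod.smul_snd, smul_eq_mul]; ring)
    (fun v w w' => by
      rw [← Finset.sum_add_distrib]
      exact Finset.sum_congr rfl fun i _ => by
        simp only [Pi.add_apply, Prod.fst_add, Prod.snd_add]; ring)
    (fun c v w => by
      simp only [smul_eq_mul]
      rw [Finset.mul_sum]
      exact Finset.sum_congr rfl fun i _ => by
        simp only [Pi.smul_apply, Prod.smul_fst, Prod.smul_snd, smul_eq_mul]; ring)

lemma Bf_apply (v w : VEC N) :
    Bf v w = ∑ i, ((v i).1 * (w i).2 + (v i).2 * (w i).1) := rfl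

lemma Bf_symm (v w : VEC N) : Bf v w = Bf w v := by
  rw [Bf_apply, Bf_apply]
  exact Finset.sum_congr rfl fun i _ => by ring

lemma Bf_refl : (Bf (N := N)).IsRefl := fun v w h => by rw [Bf_symm] at h; exact h

lemma Bf_self (v : VEC N) : Bf v v = 0 := by
  rw [Bf_apply]
  refine Finset.sum_eq_zero fun i _ => ?_
  rw [mul_comm]
  exact CharTwo.add_self_eq_zero _

lemma Bf_nondeg : (Bf (N := N)).Nondegenerate := by
  refine (Bf_refl.nondegenerate_iff_separatingLeft).2 ?_
  intro v hv
  funext i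
  have h1 := hv (Pi.single i ((0 : ZMod 2), (1 : ZMod 2)))
  have h2 := hv (Pi.single i ((1 : ZMod 2), (0 : ZMod 2)))
  rw [Bf_apply] at h1 h2
  rw [Finset.sum_eq_single_of_mem i (Finset.mem_univ i)
    (fun j _ hj => by simp [Pi.single_eq_of_ne hj])] at h1 h2
  simp only [Pi.single_eq_same, mul_one, mul_zero, add_zero, zero_add] at h1 h2
  have : v i = ((v i).1, (v i).2) := rfl
  rw [this, h1, h2]; rfl

lemma symps_eq_Bf (p q : Fin N → Fin 4) : symps p q = Bf (encs p) (encs q) := rfl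

lemma symps_zero_of_inG {p q : Fin N → Fin 4} (hp : inG G p) (hq : inG G q) :
    symps p q = 0 := by
  obtain ⟨c, hc, hcm⟩ := hp
  obtain ⟨d, hd, hdm⟩ := hq
  have hcomm := G.mul_comm' _ hcm _ hdm
  rw [smul_mul_smul_pauliOp, smul_mul_smul_pauliOp] at hcomm
  have h2 : smul2 q p = smul2 p q := funext fun i => pmul_comm' _ _
  rw [h2, mul_comm d c] at hcomm
  obtain ⟨-, hcoef⟩ := smul_pauliOp_inj
    (mul_ne_zero (mul_ne_zero (phase_ne_zero hc) (phase_ne_zero hd)) (pphs_ne_zero p q)) hcomm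
  have h3 : pphs p q = pphs q p := by
    have := mul_left_cancel₀ (mul_ne_zero (phase_ne_zero hc) (phase_ne_zero hd)) hcoef
    exact this
  have h4 := pphs_comm p q
  rw [h3] at h4
  have h5 : sgn (symps p q) = 1 :=
    mul_right_cancel₀ (pphs_ne_zero q p) (by rw [one_mul]; exact h4.symm)
  by_contra hne
  have : symps p q = 1 := by
    rcases (show ∀ x : ZMod 2, x = 0 ∨ x = 1 by decide) (symps p q) with h | h
    · exact absurd h hne
    · exact h
  rw [this, sgn_one] at h5
  norm_num at h5

/-- The isotropic subspace of `G`'s Pauli strings. -/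
def Wsub : Submodule (ZMod 2) (VEC N) where
  carrier := {v | inG G (decs v)}
  zero_mem' := by
    have : decs (0 : VEC N) = fun _ => 0 := funext fun i => rfl
    simpa [Set.mem_setOf_eq, this] using inG_zero G
  add_mem' := by
    intro v w hv hw
    have : decs (v + w) = smul2 (decs v) (decs w) := by
      funext i
      show pdec (v i + w i) = pdec (penc (pdec (v i)) + penc (pdec (w i)))
      rw [penc_pdec, penc_pdec]
    simpa [Set.mem_setOf_eq, this] using inG_mul G hv hw
  smul_mem' := by
    intro c v hv
    rcases (show ∀ x : ZMod 2, x = 0 ∨ x = 1 by decide) c with rfl | rfl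
    · rw [zero_smul]
      have : decs (0 : VEC N) = fun _ => 0 := funext fun i => rfl
      simpa [Set.mem_setOf_eq, this] using inG_zero G
    · rwa [one_smul]

lemma mem_Wsub_iff {v : VEC N} : v ∈ Wsub G ↔ inG G (decs v) := Iff.rfl

lemma encs_mem_Wsub_iff {p : Fin N → Fin 4} : encs p ∈ Wsub G ↔ inG G p := by
  rw [mem_Wsub_iff, decs_encs]

lemma card_Wsub_le : 2 ^ N ≤ Fintype.card (Wsub G) := by
  have : ∃ f : G.carrier → Wsub G, Function.Injective f := by
    refine ⟨fun g => ⟨encs (Classical.choose (Classical.choose_spec (G.mem_pauli g g.2))), ?_⟩, ?_⟩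
    · obtain ⟨hc, hrep⟩ :=
        Classical.choose_spec (Classical.choose_spec (G.mem_pauli g g.2))
      exact (encs_mem_Wsub_iff G).2 ⟨_, hc, by rw [← hrep]; exact g.2⟩
    · intro g g' hgg'
      obtain ⟨hc, hrep⟩ := Classical.choose_spec (Classical.choose_spec (G.mem_pauli g g.2))
      obtain ⟨hc', hrep'⟩ := Classical.choose_spec (Classical.choose_spec (G.mem_pauli g' g'.2))
      have hpp : Classical.choose (Classical.choose_spec (G.mem_pauli g g.2)) =
          Classical.choose (Classical.choose_spec (G.mem_pauli g' g'.2)) := by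
        have := congrArg (fun w : Wsub G => decs w.1) hgg'
        simpa [decs_encs] using this
      have hceq : Classical.choose (G.mem_pauli g g.2) =
          Classical.choose (G.mem_pauli g' g'.2) :=
        inG_c_unique G hc hc' (by rw [← hrep]; exact g.2) (by rw [hpp, ← hrep']; exact g'.2)
      apply Subtype.ext
      rw [hrep, hrep', hpp, hceq]
  obtain ⟨f, hf⟩ := this
  calc 2 ^ N = G.carrier.card := G.card_eq.symm ▸ by rw [Fintype.card_fin]
    _ = Fintype.card G.carrier := (Fintype.card_coe _).symm
    _ ≤ Fintype.card (Wsub G) := Fintype.card_le_of_injective f hf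

end stab

section anticomm
variable {N : ℕ} (G : MaxStabilizer (Fin N))

lemma finrank_VEC : Module.finrank (ZMod 2) (VEC N) = 2 * N := by
  rw [Module.finrank_pi_fintype]
  simp only [Module.finrank_prod, Module.finrank_self, Finset.sum_const, Finset.card_univ,
    Fintype.card_fin, smul_eq_mul]
  ring

lemma exists_symps_one (hδ : 5 ≤ sdelta G) (R : Fin N → Fin 4) (hR : R ≠ fun _ => 0)
    (hcard : (psupp R).card ≤ 4) :
    ∃ (c : ℂ) (p : Fin N → Fin 4), (c = 1 ∨ c = -1) ∧ c • pauliOp p ∈ G.carrier ∧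
      symps p R = 1 := by
  by_contra hcon
  push_neg at hcon
  have hnot : ∀ p, inG G p → symps p R = 0 := by
    rintro p ⟨c, hc, hm⟩
    rcases (show ∀ x : ZMod 2, x = 0 ∨ x = 1 by decide) (symps p R) with hx | hx
    · exact hx
    · exact absurd hx (hcon c p hc hm)
  have hvW : encs R ∉ Wsub G := by
    intro hv
    obtain ⟨c, hc, hm⟩ := (encs_mem_Wsub_iff G).1 hv
    have hne1 : c • pauliOp R ≠ 1 := by
      intro h1
      have h2 : (1 : QOp (Fin N)) = (1:ℂ) • pauliOp (fun _ => (0 : Fin 4)) := by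
        rw [pauliOp_zero, one_smul]
      rw [h2] at h1
      exact hR (smul_pauliOp_inj (phase_ne_zero hc) h1).1
    have hmem : (psupp R).card ∈ {k | ∃ (c : ℂ) (p : Fin N → Fin 4),
        (c = 1 ∨ c = -1) ∧ c • pauliOp p ∈ G.carrier ∧ c • pauliOp p ≠ 1 ∧
          (psupp p).card = k} := ⟨c, R, hc, hm, hne1, rfl⟩
    have hle : sdelta G ≤ (psupp R).card := Nat.sInf_le hmem
    omega
  set W := Wsub G with hWdef
  set v := encs R with hvdef
  set W' := W ⊔ Submodule.span (ZMod 2) {v} with hW'def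
  have hvW' : v ∈ W' := Submodule.mem_sup_right (Submodule.mem_span_singleton_self v)
  have hWleW' : W ≤ W' := le_sup_left
  have horth : ∀ a ∈ W, Bf a v = 0 := by
    intro a ha
    have h1 := hnot (decs a) ha
    have h2 : Bf a v = symps (decs a) R := by rw [symps_eq_Bf, encs_decs]
    rw [h2, h1]
  have hWW : ∀ a ∈ W, ∀ b ∈ W, Bf a b = 0 := by
    intro a ha b hb
    have h1 := symps_zero_of_inG G (p := decs a) (q := decs b) ha hb
    rwa [symps_eq_Bf, encs_decs, encs_decs] at h1
  have hiso : ∀ x ∈ W', ∀ y ∈ W', Bf x y = 0 := by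
    intro x hx y hy
    obtain ⟨a, ha, x', hx', rfl⟩ := Submodule.mem_sup.1 hx
    obtain ⟨b, hb, y', hy', rfl⟩ := Submodule.mem_sup.1 hy
    obtain ⟨s, rfl⟩ := Submodule.mem_span_singleton.1 hx'
    obtain ⟨t, rfl⟩ := Submodule.mem_span_singleton.1 hy'
    have e1 : Bf a b = 0 := hWW a ha b hb
    have e2 : Bf a v = 0 := horth a ha
    have e3 : Bf v b = 0 := by rw [Bf_symm]; exact horth b hb
    have e4 : Bf v v = 0 := Bf_self v
    simp only [map_add, _root_.map_smul, LinearMap.add_apply, LinearMap.smul_apply,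
      e1, e2, e3, e4, smul_eq_mul, mul_zero, add_zero, smul_zero]
  have hle' : W' ≤ Bf.orthogonal W' := by
    intro x hx
    rw [LinearMap.BilinForm.mem_orthogonal_iff]
    intro y hy
    exact hiso y hy x hx
  have h1 : Module.finrank (ZMod 2) W' ≤ Module.finrank (ZMod 2) (Bf.orthogonal W') :=
    Submodule.finrank_mono hle'
  have h2 : Module.finrank (ZMod 2) (Bf.orthogonal W')
      = Module.finrank (ZMod 2) (VEC N) - Module.finrank (ZMod 2) W' :=
    LinearMap.BilinForm.finrank_orthogonal Bf_nondeg W'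
  have h3 : Module.finrank (ZMod 2) ↥W' ≤ N := by
    rw [h2, finrank_VEC] at h1; omega
  have hcardW' : Fintype.card ↥W' ≤ 2 ^ N := by
    have hc1 : Fintype.card ↥W' = Fintype.card (ZMod 2) ^ Module.finrank (ZMod 2) ↥W' :=
      Module.card_eq_pow_finrank (K := ZMod 2) (V := ↥W')
    rw [hc1, ZMod.card]
    exact Nat.pow_le_pow_right (by norm_num) h3
  have hmemf : ∀ (b : Bool) (w : ↥W), (w : VEC N) + (if b then v else 0) ∈ W' := by
    intro b w
    refine Submodule.add_mem _ (hWleW' w.2) ?_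
    cases b
    · simpa using Submodule.zero_mem W'
    · simpa using hvW'
  have hinj : Function.Injective
      (fun bw : Bool × ↥W => (⟨(bw.2 : VEC N) + (if bw.1 then v else 0),
        hmemf bw.1 bw.2⟩ : ↥W')) := by
    rintro ⟨b, w⟩ ⟨b', w'⟩ hbw
    have heq : (w : VEC N) + (if b then v else 0) = (w' : VEC N) + (if b' then v else 0) :=
      congrArg Subtype.val hbw
    cases b <;> cases b' <;>
      simp only [if_true, if_false, add_zero, Bool.false_eq_true] at heq
    · exact Prod.ext rfl (Subtype.ext heq)
    · exfalso
      have hv2 : v = (w : VEC N) - w' := by rw [heq]; abel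
      exact hvW (by rw [hv2]; exact Submodule.sub_mem _ w.2 w'.2)
    · exfalso
      have hv2 : v = (w' : VEC N) - w := by rw [← heq]; abel
      exact hvW (by rw [hv2]; exact Submodule.sub_mem _ w'.2 w.2)
    · refine Prod.ext rfl (Subtype.ext ?_)
      exact add_right_cancel heq
  have hlow : 2 * Fintype.card ↥W ≤ Fintype.card ↥W' := by
    calc 2 * Fintype.card ↥W = Fintype.card (Bool × ↥W) := by
          rw [Fintype.card_prod, Fintype.card_bool]
      _ ≤ Fintype.card ↥W' := Fintype.card_le_of_injective _ hinj
  have hWcard : 2 ^ N ≤ Fintype.card ↥W := card_Wsub_le G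
  have : 2 * 2 ^ N ≤ 2 ^ N :=
    le_trans (Nat.mul_le_mul_left 2 hWcard) (le_trans hlow hcardW')
  have hpos : 0 < 2 ^ N := Nat.pow_pos (by norm_num)
  omega

end anticomm

section main
variable {N : ℕ} (G : MaxStabilizer (Fin N)) (ψ : (Fin N → Fin 2) → ℂ)

lemma pauliOp_anticomm {p R : Fin N → Fin 4} (hs : symps p R = 1) :
    pauliOp p * pauliOp R = -(pauliOp R * pauliOp p) := by
  rw [pauliOp_mul, pauliOp_mul]
  have h2 : smul2 R p = smul2 p R := funext fun i => pmul_comm' _ _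
  rw [h2, pphs_comm p R, hs, sgn_one, neg_one_mul, neg_smul]

lemma expect_zero (hψ : IsStabState G ψ) {R p : Fin N → Fin 4} {c : ℂ}
    (hc : c = 1 ∨ c = -1) (hm : c • pauliOp p ∈ G.carrier) (hs : symps p R = 1) :
    star ψ ⬝ᵥ (pauliOp R).mulVec ψ = 0 := by
  have hg : ((c • pauliOp p).mulVec ψ) = ψ := hψ.1 _ hm
  have hcc : c * c = 1 := by rcases hc with rfl | rfl <;> norm_num
  have hgp : (pauliOp p).mulVec ψ = c • ψ := by
    have h1 : c • ((pauliOp p).mulVec ψ) = ψ := by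
      rw [← Matrix.smul_mulVec]; exact hg
    calc (pauliOp p).mulVec ψ = (c*c) • (pauliOp p).mulVec ψ := by rw [hcc, one_smul]
      _ = c • (c • ((pauliOp p).mulVec ψ)) := by rw [smul_smul]
      _ = c • ψ := by rw [h1]
  have hstar : star ψ ᵥ* pauliOp p = c • star ψ := by
    have h1 : star ((pauliOp p).mulVec ψ) = star ψ ᵥ* (pauliOp p)ᴴ :=
      Matrix.star_mulVec _ _
    rw [pauliOp_herm] at h1
    have hstc : (star c : ℂ) = c := by rcases hc with rfl | rfl <;> simp
    rw [← h1, hgp, star_smul, hstc]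
  set E := star ψ ⬝ᵥ (pauliOp R).mulVec ψ with hE
  have key : E = -E := by
    calc E = star ψ ⬝ᵥ (pauliOp R).mulVec ((c • pauliOp p).mulVec ψ) := by rw [hg]
      _ = star ψ ⬝ᵥ ((pauliOp R * (c • pauliOp p)).mulVec ψ) := by
          rw [Matrix.mulVec_mulVec]
      _ = star ψ ⬝ᵥ ((c • (pauliOp R * pauliOp p)).mulVec ψ) := by rw [Matrix.mul_smul]
      _ = c * (star ψ ⬝ᵥ ((pauliOp R * pauliOp p)).mulVec ψ) := by
          rw [Matrix.smul_mulVec, dotProduct_smul, smul_eq_mul]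
      _ = -(c * (star ψ ⬝ᵥ ((pauliOp p * pauliOp R)).mulVec ψ)) := by
          rw [show pauliOp R * pauliOp p = -(pauliOp p * pauliOp R) from by
            rw [pauliOp_anticomm hs, neg_neg]]
          rw [Matrix.neg_mulVec, dotProduct_neg, mul_neg]
      _ = -(c * (star ψ ⬝ᵥ (pauliOp p).mulVec ((pauliOp R).mulVec ψ))) := by
          rw [Matrix.mulVec_mulVec]
      _ = -(c * ((star ψ ᵥ* pauliOp p) ⬝ᵥ (pauliOp R).mulVec ψ)) := by
          rw [Matrix.dotProduct_mulVec]
      _ = -(c * (c * E)) := by rw [hstar, smul_dotProduct, smul_eq_mul]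
      _ = -E := by rw [← mul_assoc, hcc, one_mul]
  linear_combination key / 2

end main

section final
variable {N : ℕ}

lemma dot_mulVec_sum {ι : Type*} (s : Finset ι) (A : ι → QOp (Fin N))
    (v w : (Fin N → Fin 2) → ℂ) :
    star v ⬝ᵥ (∑ i ∈ s, A i).mulVec w = ∑ i ∈ s, star v ⬝ᵥ (A i).mulVec w := by
  induction s using Finset.cons_induction with
  | empty =>
      rw [Finset.sum_empty, Finset.sum_empty, Matrix.zero_mulVec, dotProduct_zero]
  | cons a s ha ih =>
      rw [Finset.sum_cons, Finset.sum_cons, Matrix.add_mulVec, dotProduct_add, ih]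

theorem stmt7' (G : MaxStabilizer (Fin N)) (ψ : (Fin N → Fin 2) → ℂ)
    (hψ : IsStabState G ψ) (hδ : 5 ≤ sdelta G) (h : (Fin N → Fin 4) → ℂ)
    (hloc : ∀ P, h P ≠ 0 → (psupp P).card ≤ 2)
    (hann : (∑ P : Fin N → Fin 4, h P • pauliOp P).mulVec ψ = 0) :
    (∑ P : Fin N → Fin 4, h P • pauliOp P) = 0 := by
  have hnorm : star ψ ⬝ᵥ ψ = 1 := hψ.2
  set Ept : (Fin N → Fin 4) → ℂ := fun R => star ψ ⬝ᵥ (pauliOp R).mulVec ψ with hEpt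
  have hE0 : Ept (fun _ => 0) = 1 := by
    rw [hEpt]
    simp only [pauliOp_zero, Matrix.one_mulVec]
    exact hnorm
  have hzero : ∀ P, h P = 0 := by
    intro P₀
    by_cases hc2 : (psupp P₀).card ≤ 2
    swap
    · by_contra hne; exact hc2 (hloc P₀ hne)
    have hkey : ∀ Q : Fin N → Fin 4,
        (h Q * pphs P₀ Q) * Ept (smul2 P₀ Q) = if Q = P₀ then h P₀ else 0 := by
      intro Q
      rcases eq_or_ne Q P₀ with rfl | hQP
      · rw [if_pos rfl]
        have h1 : smul2 Q Q = fun _ => 0 := funext fun i => pmul_self _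
        have h2 : pphs Q Q = 1 := by
          unfold pphs
          rw [Finset.prod_congr rfl fun i _ => pph_self (Q i)]
          simp
        rw [h1, h2, hE0, mul_one, mul_one]
      · rw [if_neg hQP]
        by_cases hQ : h Q = 0
        · rw [hQ, zero_mul, zero_mul]
        · have hcQ := hloc Q hQ
          have hRne : smul2 P₀ Q ≠ fun _ => 0 := by
            intro hR0
            exact hQP (funext fun i => (pmul_eq_zero_iff.1 (congrFun hR0 i)).symm)
          have hsupp : psupp (smul2 P₀ Q) ⊆ psupp P₀ ∪ psupp Q := by
            intro i hi
            simp only [psupp, Finset.mem_filter, Finset.mem_univ, true_and,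
              Finset.mem_union] at hi ⊢
            by_contra hni
            push_neg at hni
            obtain ⟨h1, h2⟩ := hni
            exact hi (show smul2 P₀ Q i = 0 by
              show pmul (P₀ i) (Q i) = 0
              rw [h1, h2]
              decide)
          have hcR : (psupp (smul2 P₀ Q)).card ≤ 4 :=
            le_trans (Finset.card_le_card hsupp)
              (le_trans (Finset.card_union_le _ _) (by omega))
          obtain ⟨c, p, hcp, hmem, hsy⟩ := exists_symps_one G hδ (smul2 P₀ Q) hRne hcR
          have hEzero : Ept (smul2 P₀ Q) = 0 := expect_zero G ψ hψ hcp hmem hsy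
          rw [hEzero, mul_zero]
    have hsum : star ψ ⬝ᵥ ((pauliOp P₀ * (∑ P, h P • pauliOp P)).mulVec ψ) = 0 := by
      rw [← Matrix.mulVec_mulVec, hann, Matrix.mulVec_zero, dotProduct_zero]
    have hexp : pauliOp P₀ * (∑ P, h P • pauliOp P)
        = ∑ Q, (h Q * pphs P₀ Q) • pauliOp (smul2 P₀ Q) := by
      rw [Finset.mul_sum]
      refine Finset.sum_congr rfl fun Q _ => ?_
      rw [Matrix.mul_smul, pauliOp_mul, smul_smul]
    rw [hexp, dot_mulVec_sum] at hsum
    have hterm : ∀ Q : Fin N → Fin 4,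
        star ψ ⬝ᵥ ((h Q * pphs P₀ Q) • pauliOp (smul2 P₀ Q)).mulVec ψ
          = (h Q * pphs P₀ Q) * Ept (smul2 P₀ Q) := by
      intro Q
      rw [Matrix.smul_mulVec, dotProduct_smul, smul_eq_mul]
    rw [Finset.sum_congr rfl fun Q _ => (hterm Q).trans (hkey Q)] at hsum
    rw [Finset.sum_ite_eq' Finset.univ P₀ (fun _ => h P₀)] at hsum
    simpa using hsum
  exact Finset.sum_eq_zero fun P _ => by rw [hzero P, zero_smul]

end final

/-- No-go: if `δ(G) ≥ 5` (so the stabilizer state is in 4-body MITE), any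
traceless Hamiltonian whose Pauli terms act on at most 2 sites and which annihilates the
stabilizer state must vanish. -/
theorem stmt7 (N : ℕ) (G : MaxStabilizer (Fin N)) (ψ : (Fin N → Fin 2) → ℂ)
    (hψ : IsStabState G ψ) (hδ : 5 ≤ sdelta G) (h : (Fin N → Fin 4) → ℂ)
    (hloc : ∀ P, h P ≠ 0 → (psupp P).card ≤ 2)
    (htr : h (fun _ => 0) = 0)
    (hann : (∑ P : Fin N → Fin 4, h P • pauliOp P).mulVec ψ = 0) :
    (∑ P : Fin N → Fin 4, h P • pauliOp P) = 0 := stmt7' G ψ hψ hδ h hloc hann
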